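/- arXiv:2305.01473 — 2 statements merged into one kernel-verified Lean document; each statement's English description precedes it below -/
import Mathlib

section
/- For the interval polytope T = {p : l ≤ p ≤ u, ∑ p_i = 1} (nonempty) and any x ∈ ℝ^n, there exists a minimizer p* of pᵀ x over T and a threshold t ∈ ℝ such that p*_i = u_i whenever x_i < t and p*_i = l_i whenever x_i > t. -/
open Matrix

/-- For the nonempty interval polytope `T = {p : l ≤ p ≤ u, ∑ p = 1}` and any `x`,
there is a minimizer `p*` of `pᵀ x` over `T` and a threshold `t` with
`p*_i = u_i` whenever `x_i < t` and `p*_i = l_i` whenever `x_i > t`. -/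
theorem stmt_13 (n : ℕ) (l u : Fin n → ℝ) (x : Fin n → ℝ)
    (hlu : ∀ i, l i ≤ u i)
    (hsl : ∑ i, l i ≤ 1) (hsu : 1 ≤ ∑ i, u i)
    (T : Set (Fin n → ℝ))
    (hT : T = {p : Fin n → ℝ | (∀ i, l i ≤ p i ∧ p i ≤ u i) ∧ ∑ i, p i = 1}) :
    ∃ p ∈ T, (∀ q ∈ T, p ⬝ᵥ x ≤ q ⬝ᵥ x) ∧
      ∃ t : ℝ, ∀ i, (x i < t → p i = u i) ∧ (t < x i → p i = l i) := by
  subst hT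
  rcases Nat.eq_zero_or_pos n with hn | hn
  · subst hn
    simp at hsu
    linarith
  haveI : NeZero n := ⟨hn.ne'⟩
  set S : Finset ℝ := Finset.image x Finset.univ with hS
  have hSne : S.Nonempty := ⟨x ⟨0, hn⟩, Finset.mem_image_of_mem x (Finset.mem_univ _)⟩
  set H : ℝ → ℝ := fun v => ∑ i, if x i ≤ v then u i else l i with hH
  set A : Finset ℝ := S.filter (fun v => 1 ≤ H v) with hA
  have hmaxA : S.max' hSne ∈ A := by
    rw [hA, Finset.mem_filter]
    refine ⟨S.max'_mem hSne, ?_⟩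
    have hmax : H (S.max' hSne) = ∑ i, u i := by
      apply Finset.sum_congr rfl
      intro i _
      rw [if_pos (S.le_max' (x i) (Finset.mem_image_of_mem x (Finset.mem_univ i)))]
    rw [hmax]; exact hsu
  have hAne : A.Nonempty := ⟨_, hmaxA⟩
  set t := A.min' hAne with ht
  have htS : t ∈ S := (Finset.mem_filter.mp (A.min'_mem hAne)).1
  have htH : 1 ≤ H t := (Finset.mem_filter.mp (A.min'_mem hAne)).2
  set G : ℝ := ∑ i, if x i < t then u i else l i with hG
  have hGle : G ≤ 1 := by
    by_cases hb : ∃ v ∈ S, v < t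
    · set B := S.filter (· < t) with hB
      have hBne : B.Nonempty := by
        obtain ⟨v, hv, hvt⟩ := hb
        exact ⟨v, Finset.mem_filter.mpr ⟨hv, hvt⟩⟩
      set v' := B.max' hBne with hv'
      have hv'S : v' ∈ S := (Finset.mem_filter.mp (B.max'_mem hBne)).1
      have hv't : v' < t := (Finset.mem_filter.mp (B.max'_mem hBne)).2
      have hGH' : G = H v' := by
        apply Finset.sum_congr rfl
        intro i _
        by_cases h : x i < t
        · rw [if_pos h, if_pos (B.le_max' (x i)
            (Finset.mem_filter.mpr ⟨Finset.mem_image_of_mem x (Finset.mem_univ i), h⟩))]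
        · rw [if_neg h, if_neg (fun hle => h (lt_of_le_of_lt hle hv't))]
      have hv'A : v' ∉ A := fun hmem => absurd (A.min'_le v' hmem) (not_le.mpr hv't)
      have hH1 : ¬ (1 ≤ H v') := fun h1 => hv'A (Finset.mem_filter.mpr ⟨hv'S, h1⟩)
      push_neg at hH1
      linarith [hGH'.le]
    · push_neg at hb
      have hGl : G = ∑ i, l i := by
        apply Finset.sum_congr rfl
        intro i _
        exact if_neg (not_lt.mpr (hb (x i) (Finset.mem_image_of_mem x (Finset.mem_univ i))))
      rw [hGl]; exact hsl
  have hGH : G ≤ H t := by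
    apply Finset.sum_le_sum
    intro i _
    by_cases h : x i < t
    · rw [if_pos h, if_pos h.le]
    · rw [if_neg h]
      by_cases h2 : x i ≤ t
      · rw [if_pos h2]; exact hlu i
      · rw [if_neg h2]
  set lam : ℝ := if H t - G = 0 then 0 else (1 - G) / (H t - G) with hlam
  have hDpos : H t - G ≠ 0 → 0 < H t - G := fun h => lt_of_le_of_ne (by linarith) (Ne.symm h)
  have hlam0 : 0 ≤ lam := by
    rw [hlam]; split_ifs with h
    · exact le_rfl
    · exact div_nonneg (by linarith) (hDpos h).le
  have hlam1 : lam ≤ 1 := by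
    rw [hlam]; split_ifs with h
    · norm_num
    · rw [div_le_one (hDpos h)]; linarith
  set p : Fin n → ℝ := fun i =>
    if x i < t then u i else if t < x i then l i else l i + lam * (u i - l i) with hp
  have hdiff : ∀ i, p i - (if x i < t then u i else l i) =
      lam * ((if x i ≤ t then u i else l i) - (if x i < t then u i else l i)) := by
    intro i
    rcases lt_trichotomy (x i) t with h | h | h
    · rw [hp]; dsimp only
      rw [if_pos h, if_pos h, if_pos h.le]; ring
    · rw [hp]; dsimp only
      rw [if_neg (by rw [h]; exact lt_irrefl t), if_neg (by rw [h]; exact lt_irrefl t),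
        if_neg (by rw [h]; exact lt_irrefl t), if_pos h.le]
      ring
    · rw [hp]; dsimp only
      rw [if_neg (not_lt.mpr h.le), if_neg (not_lt.mpr h.le), if_pos h,
        if_neg (not_le.mpr h)]
      ring
  have hsum : ∑ i, p i = 1 := by
    have h1 : ∑ i, p i - G = lam * (H t - G) := by
      rw [hG, hH]
      dsimp only
      rw [← Finset.sum_sub_distrib, ← Finset.sum_sub_distrib, Finset.mul_sum]
      exact Finset.sum_congr rfl (fun i _ => hdiff i)
    rw [hlam] at h1
    split_ifs at h1 with h
    · have : H t = G := by linarith [sub_eq_zero.mp h]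
      linarith
    · rw [div_mul_cancel₀ _ h] at h1
      linarith
  have hbound : ∀ i, l i ≤ p i ∧ p i ≤ u i := by
    intro i
    rw [hp]; dsimp only
    rcases lt_trichotomy (x i) t with h | h | h
    · rw [if_pos h]; exact ⟨hlu i, le_refl _⟩
    · rw [if_neg (by rw [h]; exact lt_irrefl t), if_neg (by rw [h]; exact lt_irrefl t)]
      constructor
      · nlinarith [hlu i]
      · nlinarith [hlu i]
    · rw [if_neg (not_lt.mpr h.le), if_pos h]; exact ⟨le_refl _, hlu i⟩
  have hpmem : (∀ i, l i ≤ p i ∧ p i ≤ u i) ∧ ∑ i, p i = 1 := ⟨hbound, hsum⟩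
  refine ⟨p, hpmem, ?_, t, ?_⟩
  · intro q hq
    obtain ⟨hqb, hqs⟩ := hq
    have key : ∀ i, 0 ≤ (q i - p i) * (x i - t) := by
      intro i
      rcases lt_trichotomy (x i) t with h | h | h
      · have hpi : p i = u i := by rw [hp]; dsimp only; rw [if_pos h]
        nlinarith [(hqb i).2]
      · rw [h]; simp
      · have hpi : p i = l i := by
          rw [hp]; dsimp only; rw [if_neg (not_lt.mpr h.le), if_pos h]
        nlinarith [(hqb i).1]
    have hsum' : (0:ℝ) ≤ ∑ i, (q i - p i) * (x i - t) :=
      Finset.sum_nonneg (fun i _ => key i)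
    have hexp : ∑ i, (q i - p i) * (x i - t) =
        (q ⬝ᵥ x - p ⬝ᵥ x) - t * (∑ i, q i) + t * (∑ i, p i) := by
      simp only [dotProduct, Finset.mul_sum, ← Finset.sum_sub_distrib, ← Finset.sum_add_distrib]
      exact Finset.sum_congr rfl (fun i _ => by ring)
    rw [hqs, hsum] at hexp
    linarith
  · intro i
    constructor
    · intro h
      rw [hp]; dsimp only; rw [if_pos h]
    · intro h
      rw [hp]; dsimp only; rw [if_neg (not_lt.mpr h.le), if_pos h]
end

section
/- Let f : ℝ^ℓ → ℝ be differentiable at a point u, given as f(w) = sᵀ x(w) where x(w) solves (I − P(w)) x = r with P differentiable and I − P(u) invertible. Then the gradient of f at u is given componentwise by (∇f(u))_i = sᵀ (I − P(u))^{-1} (∂P/∂w_i)(u) x(u). -/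
open Matrix

section aux

attribute [local instance] Matrix.linftyOpNormedAddCommGroup Matrix.linftyOpNormedRing
  Matrix.linftyOpNormedAlgebra

/-- continuous linear map `M ↦ s ⬝ᵥ M.mulVec r` -/
noncomputable def dotMulVecCLM (n : ℕ) (s r : Fin n → ℝ) :
    Matrix (Fin n) (Fin n) ℝ →L[ℝ] ℝ :=
  LinearMap.toContinuousLinearMap
    { toFun := fun M => s ⬝ᵥ M.mulVec r
      map_add' := by intro A B; simp [Matrix.add_mulVec, dotProduct_add]
      map_smul' := by intro c A; simp [Matrix.smul_mulVec, dotProduct_smul] }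

lemma dotMulVecCLM_apply (n : ℕ) (s r : Fin n → ℝ) (M : Matrix (Fin n) (Fin n) ℝ) :
    dotMulVecCLM n s r M = s ⬝ᵥ M.mulVec r := rfl

lemma key (n : ℕ) (g : ℝ → Matrix (Fin n) (Fin n) ℝ) (g' : Matrix (Fin n) (Fin n) ℝ) (t0 : ℝ)
    (hg : ∀ a b, HasDerivAt (fun t => g t a b) (g' a b) t0)
    (hu : IsUnit (g t0)) (s r : Fin n → ℝ) :
    (∀ᶠ t in nhds t0, IsUnit (g t)) ∧
    HasDerivAt (fun t => s ⬝ᵥ (Ring.inverse (g t)).mulVec r)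
      (-(s ⬝ᵥ (Ring.inverse (g t0) * g' * Ring.inverse (g t0)).mulVec r)) t0 := by
  haveI : CompleteSpace (Matrix (Fin n) (Fin n) ℝ) := FiniteDimensional.complete ℝ _
  -- matrix-level derivative
  have hG : HasDerivAt g g' t0 := by
    have h1 : ∀ t, g t = ∑ a : Fin n, ∑ b : Fin n, (g t a b) • Matrix.single a b (1 : ℝ) := by
      intro t
      conv_lhs => rw [matrix_eq_sum_single (g t)]
      simp [smul_single]
    have h2 : g' = ∑ a : Fin n, ∑ b : Fin n, (g' a b) • Matrix.single a b (1 : ℝ) := by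
      conv_lhs => rw [matrix_eq_sum_single g']
      simp [smul_single]
    rw [show g = fun t => ∑ a : Fin n, ∑ b : Fin n, (g t a b) • Matrix.single a b (1 : ℝ)
      from funext h1, h2]
    apply HasDerivAt.fun_sum
    intro a _
    apply HasDerivAt.fun_sum
    intro b _
    exact (hg a b).smul_const _
  obtain ⟨v, hv⟩ := hu
  have hfd : HasFDerivAt (Ring.inverse : Matrix (Fin n) (Fin n) ℝ → _)
      (-(ContinuousLinearMap.mulLeftRight ℝ _ ↑v⁻¹ ↑v⁻¹)) (g t0) := by
    rw [← hv]; exact hasFDerivAt_ringInverse v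
  have hinv : HasDerivAt (fun t => Ring.inverse (g t))
      (-(Ring.inverse (g t0) * g' * Ring.inverse (g t0))) t0 := by
    have h := hfd.comp_hasDerivAt t0 hG
    exact h.congr_deriv (by simp [Function.comp, ← hv, Ring.inverse_unit])
  constructor
  · exact hG.continuousAt.preimage_mem_nhds (Units.isOpen.mem_nhds (hv ▸ v.isUnit))
  · have := (dotMulVecCLM n s r).hasFDerivAt.comp_hasDerivAt t0 hinv
    have h2 := this
    simp only [Function.comp_def, dotMulVecCLM_apply, ContinuousLinearMap.coe_coe] at h2
    exact h2.congr_deriv (by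
      change s ⬝ᵥ (-(Ring.inverse (g t0) * g' * Ring.inverse (g t0))) *ᵥ r = _
      simp [Matrix.neg_mulVec, dotProduct_neg])

end aux

/-- If `f(w) = sᵀ x(w)` with `(I - P(w)) x(w) = r`, `P` differentiable in each
coordinate, `I - P(u)` invertible, and `f` differentiable at `u`, then the
components of the gradient of `f` at `u` are
`sᵀ (I - P(u))⁻¹ (∂P/∂w_i)(u) x(u)`. -/
theorem stmt_16 (n ℓ : ℕ) (P : (Fin ℓ → ℝ) → Matrix (Fin n) (Fin n) ℝ)
    (r s : Fin n → ℝ) (x : (Fin ℓ → ℝ) → Fin n → ℝ) (u : Fin ℓ → ℝ)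
    (f : (Fin ℓ → ℝ) → ℝ) (hf : f = fun w => s ⬝ᵥ x w)
    (hx : ∀ w, (1 - P w).mulVec (x w) = r)
    (hP : ∀ (i : Fin ℓ) (a b : Fin n),
      DifferentiableAt ℝ (fun t => P (Function.update u i t) a b) (u i))
    (hinv : IsUnit (1 - P u))
    (hdiff : DifferentiableAt ℝ f u) :
    ∀ i : Fin ℓ, fderiv ℝ f u (Pi.single i 1) =
      s ⬝ᵥ ((1 - P u)⁻¹).mulVec
        ((Matrix.of fun a b =>
            deriv (fun t => P (Function.update u i t) a b) (u i)).mulVec (x u)) := by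
  intro i
  set P' : Matrix (Fin n) (Fin n) ℝ :=
    Matrix.of fun a b => deriv (fun t => P (Function.update u i t) a b) (u i) with hP'
  set g : ℝ → Matrix (Fin n) (Fin n) ℝ := fun t => 1 - P (Function.update u i t) with hgdef
  have hgu : g (u i) = 1 - P u := by simp [hgdef, Function.update_eq_self]
  -- entrywise derivatives of g
  have hg : ∀ a b, HasDerivAt (fun t => g t a b) ((-P') a b) (u i) := by
    intro a b
    have h1 : (fun t => g t a b) = fun t => (1 : Matrix (Fin n) (Fin n) ℝ) a b
        - P (Function.update u i t) a b := by
      funext t; simp [hgdef, Matrix.sub_apply]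
    rw [h1]
    have := (hasDerivAt_const (u i) ((1 : Matrix (Fin n) (Fin n) ℝ) a b)).sub
      ((hP i a b).hasDerivAt)
    simpa [hP', Matrix.neg_apply, Pi.sub_def] using this
  have hu : IsUnit (g (u i)) := hgu ▸ hinv
  obtain ⟨hEv, hD⟩ := key n g (-P') (u i) hg hu s r
  -- derivative of f ∘ update
  have hL : HasDerivAt (fun t => Function.update u i t) (Pi.single i 1) (u i) := by
    rw [hasDerivAt_pi]
    intro j
    by_cases h : j = i
    · subst h
      simpa [Function.update_apply] using (hasDerivAt_id' (u j))
    · simpa [Function.update_apply, h, Pi.single_apply] using hasDerivAt_const (u i) (u j)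
  have hcomp : HasDerivAt (fun t => f (Function.update u i t))
      (fderiv ℝ f u (Pi.single i 1)) (u i) := by
    have hF := hdiff.hasFDerivAt
    have hF' : HasFDerivAt f (fderiv ℝ f u) (Function.update u i (u i)) := by
      rwa [Function.update_eq_self]
    exact hF'.comp_hasDerivAt (u i) hL
  -- f ∘ update eventually equals the explicit inverse formula
  have hEq : (fun t => f (Function.update u i t)) =ᶠ[nhds (u i)]
      (fun t => s ⬝ᵥ (Ring.inverse (g t)).mulVec r) := by
    filter_upwards [hEv] with t ht
    have hxt : (Ring.inverse (g t)).mulVec r = x (Function.update u i t) := by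
      rw [← hx (Function.update u i t)]
      show (Ring.inverse (g t)).mulVec ((g t).mulVec _) = _
      rw [Matrix.mulVec_mulVec, Ring.inverse_mul_cancel _ ht, Matrix.one_mulVec]
    rw [hf, hxt]
  have hD' : HasDerivAt (fun t => f (Function.update u i t))
      (-(s ⬝ᵥ (Ring.inverse (g (u i)) * (-P') * Ring.inverse (g (u i))).mulVec r)) (u i) :=
    hD.congr_of_eventuallyEq hEq
  have huniq := hcomp.unique hD'
  rw [huniq, hgu, ← Matrix.nonsing_inv_eq_ringInverse]
  have hxu : ((1 - P u)⁻¹).mulVec r = x u := by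
    rw [← hx u, Matrix.mulVec_mulVec,
      Matrix.nonsing_inv_mul _ (Matrix.isUnit_iff_isUnit_det _ |>.mp hinv), Matrix.one_mulVec]
  rw [← hxu]
  simp [Matrix.mulVec_mulVec, Matrix.neg_mulVec, dotProduct_neg, Matrix.mul_assoc,
    Matrix.mul_neg, Matrix.neg_mul]
end
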